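/- For an s-stage Runge–Kutta scheme with coefficients (a_{ij}), (b_i) applied to u' = f(u) with f satisfying ⟨y, f(y)⟩ = 0 for all y (conservative system), the update u^{n+1} = u^n + Δt Σ_i b_i f(y_i) with stage values y_i = u^n + Δt Σ_j a_{ij} f(y_j) satisfies ‖u^{n+1}‖² − ‖u^n‖² = −2Δt² Σ_{i,j} b_i a_{ij} ⟨f(y_j), f(y_i)⟩ + Δt² Σ_{i,j} b_i b_j ⟨f(y_j), f(y_i)⟩. -/
import Mathlib


open scoped RealInnerProductSpace

theorem statement8 (n s : ℕ)
    (f : EuclideanSpace ℝ (Fin n) → EuclideanSpace ℝ (Fin n))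
    (hf : ∀ y, ⟪y, f y⟫ = 0)
    (a : Fin s → Fin s → ℝ) (b : Fin s → ℝ) (Δt : ℝ)
    (un : EuclideanSpace ℝ (Fin n)) (y : Fin s → EuclideanSpace ℝ (Fin n))
    (hy : ∀ i, y i = un + Δt • ∑ j, a i j • f (y j)) :
    ‖un + Δt • ∑ i, b i • f (y i)‖ ^ 2 - ‖un‖ ^ 2
      = -2 * Δt ^ 2 * ∑ i, ∑ j, b i * a i j * ⟪f (y j), f (y i)⟫
        + Δt ^ 2 * ∑ i, ∑ j, b i * b j * ⟪f (y j), f (y i)⟫ := by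
  have key : ∀ i, ⟪un, f (y i)⟫ = -Δt * ∑ j, a i j * ⟪f (y j), f (y i)⟫ := by
    intro i
    have h0 := hf (y i)
    nth_rewrite 1 [hy i] at h0
    rw [inner_add_left, real_inner_smul_left, sum_inner] at h0
    simp only [real_inner_smul_left] at h0
    linarith [h0]
  have hexp : ‖un + Δt • ∑ i, b i • f (y i)‖ ^ 2
      = ‖un‖ ^ 2 + 2 * ⟪un, Δt • ∑ i, b i • f (y i)⟫
        + ‖Δt • ∑ i, b i • f (y i)‖ ^ 2 := by
    rw [norm_add_sq_real]
  have h1 : ⟪un, Δt • ∑ i, b i • f (y i)⟫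
      = -Δt ^ 2 * ∑ i, ∑ j, b i * a i j * ⟪f (y j), f (y i)⟫ := by
    simp only [real_inner_smul_right, inner_sum, key, Finset.mul_sum]
    exact Finset.sum_congr rfl fun i _ => Finset.sum_congr rfl fun j _ => by ring
  have h2 : ‖Δt • ∑ i, b i • f (y i)‖ ^ 2
      = Δt ^ 2 * ∑ i, ∑ j, b i * b j * ⟪f (y j), f (y i)⟫ := by
    rw [← real_inner_self_eq_norm_sq, real_inner_smul_left, real_inner_smul_right,
      sum_inner]
    simp only [real_inner_smul_left, inner_sum, real_inner_smul_right, sum_inner,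
      Finset.mul_sum]
    rw [Finset.sum_comm]
    exact Finset.sum_congr rfl fun i _ => Finset.sum_congr rfl fun j _ => by
      rw [real_inner_comm]; ring
  rw [hexp, h1, h2]
  ring
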